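/- Let J = {1,…,n−1}. Suppose E ∈ B_V satisfies ν^J(π_J(E)) > 0 and there is l ∈ ℕ such that for every ā ∈ E the fibre π_J⁻¹(π_J(ā)) ∩ E has at most l elements. Let X ⊆ M be a countable set such that E lies in the σ-algebra generated by the X-definable subsets of M^V. Then there exist F ⊆ E which is a countable intersection of X-definable sets in B⁰_V with E, a natural number r, and an L-formula ψ(x̄) with parameters from X, such that ν^J(π_J(F)) > 0 and, for every ā = (a₁,…,a_n) ∈ F, the formula ψ(ā_J, x_n) isolates the complete type of a_n over X ∪ {a₁,…,a_{n−1}} in 𝓜 (i.e. a_n satisfies it and it implies every formula over X ∪ {a₁,…,a_{n−1}} satisfied by a_n), and this type has exactly r realizations in 𝓜. -/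

import Mathlib

open FirstOrder MeasureTheory Set
open scoped ENNReal

namespace MeasureAmalgamation

variable (L : FirstOrder.Language) (M : Type*) [L.Structure M]

/-- `𝓜` is ℵ₁-saturated: every countable finitely satisfiable set of `L`-formulas in one
free variable with parameters from `M` is realized in `M`. -/
def Aleph1Saturated : Prop :=
  ∀ S : Set (L.Formula (M ⊕ Fin 1)), S.Countable →
    (∀ T : Finset (L.Formula (M ⊕ Fin 1)), ↑T ⊆ S →
      ∃ a : M, ∀ φ ∈ T, φ.Realize (Sum.elim id fun _ => a)) →
    ∃ a : M, ∀ φ ∈ S, φ.Realize (Sum.elim id fun _ => a)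

/-- The σ-algebra `B_α` generated by the Boolean algebra `B⁰_α` of parameter-definable
subsets of `M^α`. -/
def defSigma (α : Type*) : MeasurableSpace (α → M) :=
  MeasurableSpace.generateFrom {s : Set (α → M) | (Set.univ : Set M).Definable L s}

variable (n : ℕ)

/-- The projection `π_I : M^V → M^I`. -/
def proj (I : Finset (Fin n)) (x : Fin n → M) : ↥I → M := fun i => x ↑i

/-- The Boolean algebra `B⁰_{V,I}` generated by preimages under `π_I` of sets in `B⁰_I`. -/
def cylDef (I : Finset (Fin n)) : Set (Set (Fin n → M)) :=
  {s | ∃ t : Set (↥I → M), (Set.univ : Set M).Definable L t ∧ s = proj M n I ⁻¹' t}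

/-- The σ-algebra `B_{V,I}` generated by `B⁰_{V,I}`. -/
def cylSigma (I : Finset (Fin n)) : MeasurableSpace (Fin n → M) :=
  MeasurableSpace.generateFrom (cylDef L M n I)

/-- The push-forward measure `ν^I` of `ν = ν^V` under `π_I`. -/
noncomputable def nuI (ν : @Measure (Fin n → M) (defSigma L M (Fin n)))
    (I : Finset (Fin n)) : @Measure (↥I → M) (defSigma L M ↥I) :=
  @Measure.map _ _ (defSigma L M (Fin n)) (defSigma L M ↥I) (proj M n I) ν

/-- Combining a `W`-tuple and a `(V ∖ W)`-tuple into a `V`-tuple. -/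
def glue (W : Finset (Fin n)) (x : ↥W → M) (y : ↥(Wᶜ) → M) : Fin n → M :=
  fun i => if h : i ∈ W then x ⟨i, h⟩ else y ⟨i, Finset.mem_compl.mpr h⟩

/-- The Definability condition: for all `W ⊆ V` and `B ∈ B_V`, the function
`x_W ↦ ν^{V∖W}(B(x_W))` is `B_W`-measurable. -/
def DefinabilityCond (ν : @Measure (Fin n → M) (defSigma L M (Fin n))) : Prop :=
  ∀ (W : Finset (Fin n)) (B : Set (Fin n → M)),
    MeasurableSet[defSigma L M (Fin n)] B →
    @Measurable _ _ (defSigma L M ↥W) _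
      (fun x : ↥W → M => nuI L M n ν Wᶜ {y : ↥(Wᶜ) → M | glue M n W x y ∈ B})

/-- The Fubini condition: for all `W ⊆ V` and essentially bounded `B_V`-measurable
`f : M^V → ℝ`, `∫ f dν^V = ∫∫ f dν^W dν^{V∖W}`. -/
def FubiniCond (ν : @Measure (Fin n → M) (defSigma L M (Fin n))) : Prop :=
  ∀ (W : Finset (Fin n)) (f : (Fin n → M) → ℝ),
    @Measurable _ _ (defSigma L M (Fin n)) _ f →
    (∃ C : ℝ, ∀ᵐ x ∂ν, |f x| ≤ C) →
    ∫ x, f x ∂ν =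
      ∫ y, (∫ x, f (glue M n W x y) ∂(nuI L M n ν W)) ∂(nuI L M n ν Wᶜ)

/-- The index set `J = {1,…,n−1}`, i.e. all indices except the last one. -/
def Jset (n : ℕ) (hn : 2 ≤ n) : Finset (Fin n) := {(⟨n - 1, by omega⟩ : Fin n)}ᶜ

/-- The set of realizations in `𝓜` of the complete type of `a` over `Z`: the elements of `M`
satisfying every `L`-formula with parameters from `Z` which is satisfied by `a`. -/
def typeRealizations (Z : Set M) (a : M) : Set M :=
  {b | ∀ (m : ℕ) (χ : L.Formula (Fin m ⊕ Fin 1)) (q : Fin m → M), (∀ i, q i ∈ Z) →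
    χ.Realize (Sum.elim q fun _ => a) → χ.Realize (Sum.elim q fun _ => b)}

/-- A set `ψS` (the solution set of a formula over `Z`) isolates the type of `a` over `Z`:
`a` satisfies it, and it implies every formula with parameters from `Z` satisfied by `a`. -/
def IsolatesTypeOver (Z : Set M) (ψS : Set M) (a : M) : Prop :=
  a ∈ ψS ∧ ∀ (m : ℕ) (χ : L.Formula (Fin m ⊕ Fin 1)) (q : Fin m → M), (∀ i, q i ∈ Z) →
    χ.Realize (Sum.elim q fun _ => a) → ∀ b ∈ ψS, χ.Realize (Sum.elim q fun _ => b)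



section Helpers

variable {L : FirstOrder.Language} {M : Type*} [L.Structure M]

instance countable_boundedFormula {α : Type*} [Countable α]
    [Countable (Σ l, L.Functions l)] [Countable (Σ l, L.Relations l)] {k : ℕ} :
    Countable (L.BoundedFormula α k) := by
  have h1 : Countable (Σ n, L.BoundedFormula α n) :=
    (FirstOrder.Language.BoundedFormula.listEncode_sigma_injective (L := L) (α := α)).countable
  exact (sigma_mk_injective (β := fun n => L.BoundedFormula α n) (i := k)).countable

lemma definable_iInter_fin {X : Set M} {α : Type*} {k : ℕ} {f : Fin k → Set (α → M)}
    (h : ∀ i, X.Definable L (f i)) : X.Definable L (⋂ i, f i) := by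
  induction k with
  | zero => simp only [Set.iInter_of_empty]; exact (Set.definable_univ (A := X) (L := L) (α := α))
  | succ k ih =>
    have heq : (⋂ i, f i) = f 0 ∩ ⋂ i : Fin k, f i.succ := by
      ext x
      simp only [Set.mem_iInter, Set.mem_inter_iff, Fin.forall_fin_succ]
    rw [heq]
    exact (h 0).inter (ih fun i => h i.succ)

lemma tuple_of_ncard {s : Set M} {k : ℕ} (hs : s.Finite) (hcard : k ≤ s.ncard) :
    ∃ b : Fin k → M, Function.Injective b ∧ ∀ i, b i ∈ s := by
  obtain ⟨t, hts, htcard⟩ := Set.exists_subset_card_eq hcard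
  have htfin : t.Finite := hs.subset hts
  have hcardF : htfin.toFinset.card = k := by
    rw [← Set.ncard_eq_toFinset_card t htfin, htcard]
  refine ⟨fun i => (htfin.toFinset.equivFin.symm (Fin.cast hcardF.symm i) : M), ?_, ?_⟩
  · intro i j hij
    have := htfin.toFinset.equivFin.symm.injective (Subtype.val_injective hij)
    simpa [Fin.ext_iff] using this
  · intro i
    exact hts (htfin.mem_toFinset.mp (htfin.toFinset.equivFin.symm _).2)

lemma ncard_ge_of_tuple {s : Set M} {k : ℕ} (hs : s.Finite) (b : Fin k → M)
    (hbinj : Function.Injective b) (hbs : ∀ i, b i ∈ s) : k ≤ s.ncard := by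
  have h1 : Set.range b ⊆ s := by rintro _ ⟨i, rfl⟩; exact hbs i
  have h2 : (Set.range b).ncard = k := by
    rw [← Set.image_univ, Set.ncard_image_of_injective _ hbinj, Set.ncard_univ]
    simp
  rw [← h2]
  exact Set.ncard_le_ncard h1 hs

lemma tuple_exists_of_infinite {s : Set M} (hs : s.Infinite) (k : ℕ) :
    ∃ b : Fin k → M, Function.Injective b ∧ ∀ i, b i ∈ s := by
  obtain ⟨t, hts, htfin, htcard⟩ := hs.exists_subset_ncard_eq k
  obtain ⟨b, hb1, hb2⟩ := tuple_of_ncard htfin htcard.ge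
  exact ⟨b, hb1, fun i => hts (hb2 i)⟩

end Helpers



section Core

variable (L : FirstOrder.Language) {M : Type*} [L.Structure M] {n : ℕ}

/-- Index type for "theorem-format" formulas: an `L`-formula with `m` parameter slots (filled
from `X`) and `n` variable slots. -/
abbrev IdxT (X : Set M) (n : ℕ) : Type _ :=
  Σ m : ℕ, L.Formula (Fin m ⊕ Fin n) × (Fin m → ↥X)

/-- Coordinates other than `lt`. -/
abbrev SubI (n : ℕ) (lt : Fin n) : Type _ := {j : Fin n // j ≠ lt}

/-- Index type for "type-format" formulas over `X ∪ (coordinates ≠ lt)`. -/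
abbrev IdxA (X : Set M) (lt : Fin n) : Type _ :=
  Σ m : ℕ, L.Formula (Fin m ⊕ Fin 1) × (Fin m → ↥X ⊕ SubI n lt)

variable {L}




instance instNonemptyIdxA (X : Set M) (lt : Fin n) : Nonempty (IdxA L X lt) :=
  ⟨⟨0, ⊤, Fin.elim0⟩⟩

/-- Value of a parameter specification at a tuple `a`. -/
def pval (X : Set M) (lt : Fin n) (a : Fin n → M) : ↥X ⊕ SubI n lt → M :=
  Sum.elim (fun x => (x : M)) (fun j => a j)

/-- The relation defined by a theorem-format formula: `b` satisfies `ψ(p, a_J, ·)`. -/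
def RelT (X : Set M) (lt : Fin n) (e : IdxT L X n) (a : Fin n → M) (b : M) : Prop :=
  e.2.1.Realize (Sum.elim (fun i => ((e.2.2 i : M))) (Function.update a lt b))

/-- The relation defined by a type-format formula. -/
def RelA (X : Set M) (lt : Fin n) (e : IdxA L X lt) (a : Fin n → M) (b : M) : Prop :=
  e.2.1.Realize (Sum.elim (fun i => pval X lt a (e.2.2 i)) (fun _ : Fin 1 => b))

variable (X : Set M) (lt : Fin n)

def SatT (e : IdxT L X n) : Set (Fin n → M) := {a | RelT X lt e a (a lt)}

def SatA (e' : IdxA L X lt) : Set (Fin n → M) := {a | RelA X lt e' a (a lt)}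

def AtLeastSet (e : IdxT L X n) (r : ℕ) : Set (Fin n → M) :=
  {a | ∃ b : Fin r → M, Function.Injective b ∧ ∀ i, RelT X lt e a (b i)}

def ImpSet (e : IdxT L X n) (e' : IdxA L X lt) : Set (Fin n → M) :=
  {a | RelA X lt e' a (a lt) → ∀ b, RelT X lt e a b → RelA X lt e' a b}

lemma definable_SatT (e : IdxT L X n) : X.Definable L (SatT X lt e) := by
  refine Set.definable_iff_exists_formula_sum.mpr
    ⟨e.2.1.relabel (Sum.map e.2.2 id), ?_⟩
  ext v
  simp only [SatT, RelT, Set.mem_setOf_eq, FirstOrder.Language.Formula.realize_relabel,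
    Function.update_eq_self]
  exact iff_of_eq (congrArg _ (funext fun x => by cases x <;> rfl)).symm

lemma definable_SatA (e' : IdxA L X lt) : X.Definable L (SatA X lt e') := by
  refine Set.definable_iff_exists_formula_sum.mpr
    ⟨e'.2.1.relabel (fun y : Fin e'.1 ⊕ Fin 1 => match y with
      | Sum.inl i => match e'.2.2 i with
        | Sum.inl x => Sum.inl x
        | Sum.inr j => Sum.inr (j : Fin n)
      | Sum.inr _ => Sum.inr lt), ?_⟩
  ext v
  simp only [SatA, RelA, Set.mem_setOf_eq, FirstOrder.Language.Formula.realize_relabel]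
  refine iff_of_eq (congrArg _ (funext fun x => ?_)).symm
  cases x with
  | inl i =>
    rcases h : e'.2.2 i with x | j <;> simp [h, pval, Function.comp]
  | inr j => rfl

lemma definable_relSet (e : IdxT L X n) (r : ℕ) (i : Fin r) :
    X.Definable L {x : (Fin n ⊕ Fin r) → M | RelT X lt e (x ∘ Sum.inl) (x (Sum.inr i))} := by
  refine Set.definable_iff_exists_formula_sum.mpr
    ⟨e.2.1.relabel (fun y : Fin e.1 ⊕ Fin n => match y with
      | Sum.inl i' => Sum.inl (e.2.2 i')
      | Sum.inr j => Sum.inr (if j = lt then Sum.inr i else Sum.inl j)), ?_⟩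
  ext x
  simp only [RelT, Set.mem_setOf_eq, FirstOrder.Language.Formula.realize_relabel]
  refine iff_of_eq (congrArg _ (funext fun y => ?_)).symm
  cases y with
  | inl i' => rfl
  | inr j =>
    simp only [Function.comp_apply, Sum.elim_inr, Function.update_apply]
    by_cases h : j = lt <;> simp [h]

lemma definable_neqSet' (r : ℕ) (i j : Fin r) :
    X.Definable L (if i = j then (Set.univ : Set ((Fin n ⊕ Fin r) → M))
      else {x : (Fin n ⊕ Fin r) → M | x (Sum.inr i) = x (Sum.inr j)}ᶜ) := by
  split
  · exact Set.definable_univ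
  · refine Set.Definable.compl (Set.definable_iff_exists_formula_sum.mpr
      ⟨FirstOrder.Language.Term.equal
        (FirstOrder.Language.Term.var (Sum.inr (Sum.inr i)))
        (FirstOrder.Language.Term.var (Sum.inr (Sum.inr j))), ?_⟩)
    ext x
    simp [FirstOrder.Language.Formula.realize_equal, FirstOrder.Language.Term.realize_var]

lemma atLeastSet_eq (e : IdxT L X n) (r : ℕ) :
    AtLeastSet X lt e r = (fun x : (Fin n ⊕ Fin r) → M => x ∘ Sum.inl) ''
      ((⋂ i, {x : (Fin n ⊕ Fin r) → M | RelT X lt e (x ∘ Sum.inl) (x (Sum.inr i))}) ∩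
        ⋂ i, ⋂ j, (if i = j then (Set.univ : Set ((Fin n ⊕ Fin r) → M))
          else {x : (Fin n ⊕ Fin r) → M | x (Sum.inr i) = x (Sum.inr j)}ᶜ)) := by
  ext a
  constructor
  · rintro ⟨b, hbinj, hbrel⟩
    refine ⟨Sum.elim a b, ⟨?_, ?_⟩, ?_⟩
    · refine Set.mem_iInter.mpr fun i => ?_
      simpa [Sum.elim_comp_inl] using hbrel i
    · refine Set.mem_iInter.mpr fun i => Set.mem_iInter.mpr fun j => ?_
      by_cases h : i = j
      · simp [h]
      · simp only [h, if_neg, if_false]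
        intro hc
        exact h (hbinj hc)
    · exact Sum.elim_comp_inl a b
  · rintro ⟨x, ⟨hrel, hneq⟩, rfl⟩
    refine ⟨fun i => x (Sum.inr i), ?_, fun i => Set.mem_iInter.mp hrel i⟩
    intro i j hij
    by_contra h
    have := Set.mem_iInter.mp (Set.mem_iInter.mp hneq i) j
    rw [if_neg h] at this
    exact this hij

lemma definable_AtLeastSet (e : IdxT L X n) (r : ℕ) :
    X.Definable L (AtLeastSet X lt e r) := by
  rw [atLeastSet_eq]
  exact Set.Definable.image_comp
    ((definable_iInter_fin fun i => definable_relSet X lt e r i).inter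
      (definable_iInter_fin fun i => definable_iInter_fin fun j => definable_neqSet' X r i j))
    Sum.inl

lemma definable_pairA (e' : IdxA L X lt) :
    X.Definable L {x : (Fin n ⊕ Fin 1) → M | RelA X lt e' (x ∘ Sum.inl) (x (Sum.inr 0))} := by
  refine Set.definable_iff_exists_formula_sum.mpr
    ⟨e'.2.1.relabel (fun y : Fin e'.1 ⊕ Fin 1 => match y with
      | Sum.inl i => match e'.2.2 i with
        | Sum.inl x => Sum.inl x
        | Sum.inr j => Sum.inr (Sum.inl (j : Fin n))
      | Sum.inr _ => Sum.inr (Sum.inr 0)), ?_⟩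
  ext x
  simp only [RelA, Set.mem_setOf_eq, FirstOrder.Language.Formula.realize_relabel]
  refine iff_of_eq (congrArg _ (funext fun y => ?_)).symm
  cases y with
  | inl i => rcases h : e'.2.2 i with z | j <;> simp [h, pval, Function.comp]
  | inr j =>
    have : j = 0 := Subsingleton.elim _ _
    subst this; rfl

lemma impSet_eq (e : IdxT L X n) (e' : IdxA L X lt) :
    ImpSet X lt e e' = (SatA X lt e')ᶜ ∪
      ((fun x : (Fin n ⊕ Fin 1) → M => x ∘ Sum.inl) ''
        ({x : (Fin n ⊕ Fin 1) → M | RelT X lt e (x ∘ Sum.inl) (x (Sum.inr 0))} ∩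
          {x : (Fin n ⊕ Fin 1) → M | RelA X lt e' (x ∘ Sum.inl) (x (Sum.inr 0))}ᶜ))ᶜ := by
  ext a
  simp only [ImpSet, Set.mem_setOf_eq, Set.mem_union, Set.mem_compl_iff, Set.mem_image,
    SatA, Set.mem_inter_iff, not_exists]
  constructor
  · intro h
    by_cases hsat : RelA X lt e' a (a lt)
    · refine Or.inr ?_
      rintro x ⟨⟨hT, hA⟩, rfl⟩
      exact hA (h hsat _ hT)
    · exact Or.inl hsat
  · rintro (h | h)
    · intro hsat; exact absurd hsat h
    · intro hsat b hT
      by_contra hA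
      exact h (Sum.elim a (fun _ => b)) ⟨⟨by simpa [Sum.elim_comp_inl] using hT, by simpa using hA⟩,
        Sum.elim_comp_inl a _⟩

lemma definable_ImpSet (e : IdxT L X n) (e' : IdxA L X lt) :
    X.Definable L (ImpSet X lt e e') := by
  rw [impSet_eq]
  exact (definable_SatA X lt e').compl.union
    (Set.Definable.image_comp ((definable_relSet X lt e 1 0).inter
      (definable_pairA X lt e').compl) Sum.inl).compl

lemma convTZ {m : ℕ} (χ : L.Formula (Fin m ⊕ Fin n)) (p : Fin m → M) (hp : ∀ i, p i ∈ X)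
    (a : Fin n → M) {i0 : Fin n} (hi0 : i0 ≠ lt) :
    ∃ (m' : ℕ) (χ' : L.Formula (Fin m' ⊕ Fin 1)) (q : Fin m' → M),
      (∀ i, q i ∈ X ∪ a '' {j : Fin n | j ≠ lt}) ∧
      ∀ c : M, (χ'.Realize (Sum.elim q fun _ => c) ↔
        χ.Realize (Sum.elim p (Function.update a lt c))) := by
  refine ⟨m + n, χ.relabel (fun y : Fin m ⊕ Fin n => match y with
      | Sum.inl i => Sum.inl (Fin.castAdd n i)
      | Sum.inr j => if j = lt then Sum.inr 0 else Sum.inl (Fin.natAdd m j)),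
    Fin.addCases p (fun j => if j = lt then a i0 else a j), ?_, ?_⟩
  · intro i
    refine Fin.addCases (fun i' => ?_) (fun j => ?_) i
    · simp only [Fin.addCases_left]
      exact Or.inl (hp i')
    · simp only [Fin.addCases_right]
      by_cases h : j = lt
      · rw [if_pos h]
        exact Or.inr ⟨i0, hi0, rfl⟩
      · rw [if_neg h]
        exact Or.inr ⟨j, h, rfl⟩
  · intro c
    rw [FirstOrder.Language.Formula.realize_relabel]
    refine iff_of_eq (congrArg _ (funext fun y => ?_))
    cases y with
    | inl i => simp [Function.comp, Fin.addCases_left]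
    | inr j =>
      by_cases h : j = lt
      · subst h
        simp [Function.comp]
      · simp [Function.comp, h, Fin.addCases_right, Function.update_of_ne h]

lemma convZA (a : Fin n → M) {m : ℕ} (χ : L.Formula (Fin m ⊕ Fin 1)) (q : Fin m → M)
    (hq : ∀ i, q i ∈ X ∪ a '' {j : Fin n | j ≠ lt}) :
    ∃ e' : IdxA L X lt, ∀ c, RelA X lt e' a c ↔ χ.Realize (Sum.elim q fun _ => c) := by
  have hch : ∀ i, ∃ s : ↥X ⊕ SubI n lt, pval X lt a s = q i := by
    intro i
    rcases hq i with h | ⟨j, hj, hja⟩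
    · exact ⟨Sum.inl ⟨q i, h⟩, rfl⟩
    · exact ⟨Sum.inr ⟨j, hj⟩, hja⟩
  choose spec hspec using hch
  refine ⟨⟨m, χ, spec⟩, fun c => ?_⟩
  unfold RelA
  refine iff_of_eq (congrArg _ (funext fun y => ?_))
  cases y with
  | inl i => exact hspec i
  | inr j => rfl

lemma convAZ_mem (a : Fin n → M) (e' : IdxA L X lt) (i : Fin e'.1) :
    pval X lt a (e'.2.2 i) ∈ X ∪ a '' {j : Fin n | j ≠ lt} := by
  rcases h : e'.2.2 i with x | j
  · exact Or.inl x.2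
  · exact Or.inr ⟨j, j.2, rfl⟩

lemma relA_eq_realize (a : Fin n → M) (e' : IdxA L X lt) (c : M) :
    RelA X lt e' a c ↔ e'.2.1.Realize
      (Sum.elim (fun i => pval X lt a (e'.2.2 i)) fun _ => c) := Iff.rfl

lemma convAT (e' : IdxA L X lt) :
    ∃ e : IdxT L X n, ∀ (a : Fin n → M) (b : M), RelT X lt e a b ↔ RelA X lt e' a b := by
  by_cases hX : Nonempty ↥X
  · obtain ⟨x0⟩ := hX
    refine ⟨⟨e'.1, e'.2.1.relabel (fun y : Fin e'.1 ⊕ Fin 1 => match y with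
        | Sum.inl i => match e'.2.2 i with
          | Sum.inl _ => Sum.inl i
          | Sum.inr j => Sum.inr (j : Fin n)
        | Sum.inr _ => Sum.inr lt),
      fun i => (e'.2.2 i).elim id (fun _ => x0)⟩, ?_⟩
    intro a b
    unfold RelT RelA
    rw [FirstOrder.Language.Formula.realize_relabel]
    refine iff_of_eq (congrArg _ (funext fun y => ?_))
    cases y with
    | inl i =>
      rcases h : e'.2.2 i with x | j
      · simp [h, pval, Function.comp]
      · simp [h, pval, Function.comp, Function.update_of_ne j.2]
    | inr j => simp [pval, Function.comp]
  · refine ⟨⟨0, e'.2.1.relabel (fun y : Fin e'.1 ⊕ Fin 1 => match y with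
        | Sum.inl i => Sum.inr ((e'.2.2 i).elim (fun x => absurd ⟨x⟩ hX) id : SubI n lt)
        | Sum.inr _ => Sum.inr lt),
      Fin.elim0⟩, ?_⟩
    intro a b
    unfold RelT RelA
    rw [FirstOrder.Language.Formula.realize_relabel]
    refine iff_of_eq (congrArg _ (funext fun y => ?_))
    cases y with
    | inl i =>
      rcases h : e'.2.2 i with x | j
      · exact absurd ⟨x⟩ hX
      · simp [h, pval, Function.comp, Function.update_of_ne j.2]
    | inr j => simp [pval, Function.comp]

/-- The formula (with parameters from `M`) expressing `RelA e' a ·`. -/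
def formulaOf (e' : IdxA L X lt) (a : Fin n → M) : L.Formula (M ⊕ Fin 1) :=
  e'.2.1.relabel (Sum.map (fun i => pval X lt a (e'.2.2 i)) id)

lemma realize_formulaOf (e' : IdxA L X lt) (a : Fin n → M) (c : M) :
    (formulaOf X lt e' a).Realize (Sum.elim id fun _ => c) ↔ RelA X lt e' a c := by
  unfold formulaOf RelA
  rw [FirstOrder.Language.Formula.realize_relabel]
  exact iff_of_eq (congrArg _ (funext fun y => by cases y <;> rfl))

/-- The formula expressing `x ≠ b`. -/
def neqF (b : M) : L.Formula (M ⊕ Fin 1) :=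
  FirstOrder.Language.Formula.not
    (FirstOrder.Language.Term.equal
      (FirstOrder.Language.Term.var (Sum.inr 0))
      (FirstOrder.Language.Term.var (Sum.inl b)))

lemma realize_neqF (b c : M) :
    (neqF (L := L) (M := M) b).Realize (Sum.elim id fun _ => c) ↔ c ≠ b := by
  simp [neqF, FirstOrder.Language.Formula.realize_not,
    FirstOrder.Language.Formula.realize_equal]

/-- Conjunction of two type-format formulas. -/
def combineA (e f : IdxA L X lt) : IdxA L X lt :=
  ⟨e.1 + f.1,
    (e.2.1.relabel (Sum.map (Fin.castAdd f.1) id)) ⊓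
      (f.2.1.relabel (Sum.map (Fin.natAdd e.1) id)),
    Fin.addCases e.2.2 f.2.2⟩

lemma relA_combineA' (e f : IdxA L X lt) (a : Fin n → M) (c : M) :
    RelA X lt (combineA X lt e f) a c ↔ RelA X lt e a c ∧ RelA X lt f a c := by
  unfold RelA combineA
  refine Iff.trans FirstOrder.Language.BoundedFormula.realize_inf (and_congr ?_ ?_)
  · show FirstOrder.Language.Formula.Realize (FirstOrder.Language.Formula.relabel _ _) _ ↔ _
    rw [FirstOrder.Language.Formula.realize_relabel]
    refine iff_of_eq (congrArg _ (funext fun y => ?_))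
    cases y with
    | inl i => simp [Function.comp, Fin.addCases_left]
    | inr j => rfl
  · show FirstOrder.Language.Formula.Realize (FirstOrder.Language.Formula.relabel _ _) _ ↔ _
    rw [FirstOrder.Language.Formula.realize_relabel]
    refine iff_of_eq (congrArg _ (funext fun y => ?_))
    cases y with
    | inl i => simp [Function.comp, Fin.addCases_right]
    | inr j => rfl

/-- Trivially true type-format formula. -/
def eTopA : IdxA L X lt := ⟨0, ⊤, Fin.elim0⟩

lemma relA_eTopA (a : Fin n → M) (c : M) : RelA X lt (eTopA (L := L) X lt) a c := by
  unfold RelA eTopA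
  exact FirstOrder.Language.Formula.realize_top.mpr trivial

/-- Conjunction of a list of type-format formulas. -/
def listCombineA (l : List (IdxA L X lt)) : IdxA L X lt :=
  l.foldr (combineA X lt) (eTopA X lt)

lemma relA_listCombineA (l : List (IdxA L X lt)) (a : Fin n → M) (c : M) :
    RelA X lt (listCombineA X lt l) a c ↔ ∀ e ∈ l, RelA X lt e a c := by
  induction l with
  | nil => simpa [listCombineA] using relA_eTopA X lt a c
  | cons e l ih =>
    simp only [listCombineA, List.foldr_cons, List.mem_cons]
    rw [relA_combineA']
    rw [listCombineA] at ih
    rw [ih]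
    constructor
    · rintro ⟨h1, h2⟩ e' (rfl | he') ; exact h1; exact h2 e' he'
    · intro h; exact ⟨h e (Or.inl rfl), fun e' he' => h e' (Or.inr he')⟩

lemma mem_of_sameType {E : Set (Fin n → M)}
    (hEX : MeasurableSet[MeasurableSpace.generateFrom
      {s : Set (Fin n → M) | X.Definable L s}] E)
    {a b : Fin n → M}
    (hST : ∀ (m : ℕ) (χ : L.Formula (Fin m ⊕ Fin n)) (p : Fin m → M), (∀ i, p i ∈ X) →
      (χ.Realize (Sum.elim p a) ↔ χ.Realize (Sum.elim p b))) :
    a ∈ E ↔ b ∈ E := by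
  refine MeasurableSpace.generateFrom_induction
    (C := {s : Set (Fin n → M) | X.Definable L s})
    (p := fun s _ => (a ∈ s ↔ b ∈ s)) ?_ Iff.rfl (fun t _ h => not_congr h)
    (fun s _ h => by simp only [Set.mem_iUnion]; exact exists_congr h) E hEX
  intro t ht _
  rw [Set.mem_setOf_eq, Set.definable_iff_finitely_definable] at ht
  obtain ⟨A0, hA0, hdef⟩ := ht
  rw [Set.definable_iff_exists_formula_sum] at hdef
  obtain ⟨φ, rfl⟩ := hdef
  classical
  let eq : ↥(A0 : Set M) ≃ Fin A0.card :=
    (Equiv.subtypeEquivRight (fun x => Finset.mem_coe)).trans A0.equivFin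
  set p : Fin A0.card → M := fun i => ((eq.symm i : ↥(A0 : Set M)) : M) with hpdef
  have hp : ∀ i, p i ∈ X := fun i => hA0 (eq.symm i).2
  have key : ∀ v : Fin n → M, φ.Realize (Sum.elim Subtype.val v) ↔
      (φ.relabel (Sum.map eq id)).Realize (Sum.elim p v) := by
    intro v
    rw [FirstOrder.Language.Formula.realize_relabel]
    refine iff_of_eq (congrArg _ (funext fun y => ?_)).symm
    cases y with
    | inl x =>
      show p (eq x) = (x : M)
      rw [hpdef]
      simp
    | inr j => rfl
  simp only [Set.mem_setOf_eq]
  rw [key a, key b]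
  exact hST _ _ p hp

lemma sameType_update {i0 : Fin n} (hi0 : i0 ≠ lt) (a : Fin n → M) {b : M}
    (hbR : b ∈ typeRealizations L M (X ∪ a '' {j : Fin n | j ≠ lt}) (a lt)) :
    ∀ (m : ℕ) (χ : L.Formula (Fin m ⊕ Fin n)) (p : Fin m → M), (∀ i, p i ∈ X) →
      (χ.Realize (Sum.elim p a) ↔ χ.Realize (Sum.elim p (Function.update a lt b))) := by
  intro m χ p hp
  obtain ⟨m', χ', q, hq, hiff⟩ := convTZ X lt χ p hp a hi0
  have h1 : χ.Realize (Sum.elim p a) ↔ χ'.Realize (Sum.elim q fun _ => a lt) := by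
    rw [hiff (a lt), Function.update_eq_self]
  constructor
  · intro h
    exact (hiff b).mp (hbR m' χ' q hq (h1.mp h))
  · intro h
    by_contra hc
    have hnot : (FirstOrder.Language.Formula.not χ').Realize (Sum.elim q fun _ => a lt) := by
      rw [FirstOrder.Language.Formula.realize_not]
      exact fun hh => hc (h1.mpr hh)
    have := hbR m' (FirstOrder.Language.Formula.not χ') q hq hnot
    rw [FirstOrder.Language.Formula.realize_not] at this
    exact this ((hiff b).mpr h)

lemma typeReal_finite {i0 : Fin n} (hi0 : i0 ≠ lt) {E : Set (Fin n → M)}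
    (hEX : MeasurableSet[MeasurableSpace.generateFrom
      {s : Set (Fin n → M) | X.Definable L s}] E)
    {a : Fin n → M} (haE : a ∈ E) {F : Set (Fin n → M)} (hF : (F ∩ E).Finite)
    (hFfib : ∀ b : M, Function.update a lt b ∈ F) :
    (typeRealizations L M (X ∪ a '' {j : Fin n | j ≠ lt}) (a lt)).Finite := by
  have hsub : typeRealizations L M (X ∪ a '' {j : Fin n | j ≠ lt}) (a lt) ⊆
      (fun b => Function.update a lt b) ⁻¹' (F ∩ E) := by
    intro b hb
    exact ⟨hFfib b, (mem_of_sameType X hEX (sameType_update X lt hi0 a hb)).mp haE⟩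
  refine Set.Finite.subset (Set.Finite.preimage ?_ hF) hsub
  intro x _ y _ h
  have := congrFun h lt
  simpa using this

lemma exists_isolating [Countable (Σ l, L.Functions l)] [Countable (Σ l, L.Relations l)]
    (hsat : Aleph1Saturated L M) (hXc : X.Countable) (a : Fin n → M)
    (hfin : (typeRealizations L M (X ∪ a '' {j : Fin n | j ≠ lt}) (a lt)).Finite) :
    ∃ e' : IdxA L X lt, RelA X lt e' a (a lt) ∧
      ∀ b, RelA X lt e' a b →
        b ∈ typeRealizations L M (X ∪ a '' {j : Fin n | j ≠ lt}) (a lt) := by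
  haveI := hXc.to_subtype
  set R := typeRealizations L M (X ∪ a '' {j : Fin n | j ≠ lt}) (a lt) with hR
  by_contra hcon
  push_neg at hcon
  set S : Set (L.Formula (M ⊕ Fin 1)) :=
    ((fun e' => formulaOf X lt e' a) '' {e' : IdxA L X lt | RelA X lt e' a (a lt)}) ∪
      (neqF '' R) with hS
  have hScount : S.Countable := ((Set.to_countable _).image _).union (hfin.countable.image _)
  have hfinsat : ∀ T : Finset (L.Formula (M ⊕ Fin 1)), ↑T ⊆ S →
      ∃ c : M, ∀ φ ∈ T, φ.Realize (Sum.elim id fun _ => c) := by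
    intro T hT
    classical
    set lst : List (IdxA L X lt) := T.toList.filterMap (fun φ =>
      if h : ∃ e', RelA X lt e' a (a lt) ∧ formulaOf X lt e' a = φ then some h.choose
      else none) with hlst
    have hsatl : ∀ e ∈ lst, RelA X lt e a (a lt) := by
      intro e he
      rw [hlst, List.mem_filterMap] at he
      obtain ⟨φ, hφ, heq⟩ := he
      split at heq
      · rename_i h
        cases heq
        exact h.choose_spec.1
      · simp at heq
    have hbig : RelA X lt (listCombineA X lt lst) a (a lt) :=
      (relA_listCombineA X lt lst a (a lt)).mpr hsatl
    obtain ⟨c, hc1, hc2⟩ := hcon (listCombineA X lt lst) hbig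
    refine ⟨c, fun φ hφ => ?_⟩
    rcases hT hφ with ⟨e', he', rfl⟩ | ⟨b, hbR, rfl⟩
    · have hex : ∃ e'', RelA X lt e'' a (a lt) ∧
          formulaOf X lt e'' a = formulaOf X lt e' a := ⟨e', he', rfl⟩
      have hmem : hex.choose ∈ lst := by
        rw [hlst, List.mem_filterMap]
        exact ⟨formulaOf X lt e' a, Finset.mem_toList.mpr hφ, by rw [dif_pos hex]⟩
      have hrel := (relA_listCombineA X lt lst a c).mp hc1 _ hmem
      show (formulaOf X lt e' a).Realize (Sum.elim id fun _ => c)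
      rw [← hex.choose_spec.2]
      exact (realize_formulaOf X lt _ a c).mpr hrel
    · exact (realize_neqF b c).mpr (fun hcb => hc2 (hcb ▸ hbR))
  obtain ⟨d, hd⟩ := hsat S hScount hfinsat
  have hdR : d ∈ R := by
    rw [hR]
    simp only [typeRealizations, Set.mem_setOf_eq]
    intro m χ q hq hsata
    obtain ⟨e', he'⟩ := convZA X lt a χ q hq
    have hsate' : RelA X lt e' a (a lt) := (he' (a lt)).mpr hsata
    have hφS : formulaOf X lt e' a ∈ S := Set.mem_union_left _ ⟨e', hsate', rfl⟩
    exact (he' d).mp ((realize_formulaOf X lt e' a d).mp (hd _ hφS))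
  have hneqS : (neqF (L := L) d) ∈ S := Set.mem_union_right _ ⟨d, hdR, rfl⟩
  exact (realize_neqF d d).mp (hd _ hneqS) rfl

lemma typeReal_eq_solset {i0 : Fin n} (hi0 : i0 ≠ lt) (e : IdxT L X n) (a : Fin n → M)
    (hSat : a ∈ SatT X lt e) (hImp : ∀ e' : IdxA L X lt, a ∈ ImpSet X lt e e') :
    typeRealizations L M (X ∪ a '' {j : Fin n | j ≠ lt}) (a lt) = {b | RelT X lt e a b} := by
  ext b
  simp only [typeRealizations, Set.mem_setOf_eq]
  constructor
  · intro hb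
    obtain ⟨m', χ', q, hq, hiff⟩ :=
      convTZ X lt e.2.1 (fun i => ((e.2.2 i : M))) (fun i => (e.2.2 i).2) a hi0
    have hstart : χ'.Realize (Sum.elim q fun _ => a lt) := (hiff (a lt)).mpr hSat
    exact (hiff b).mp (hb m' χ' q hq hstart)
  · intro hb m χ q hq hsata
    obtain ⟨e', he'⟩ := convZA X lt a χ q hq
    exact (he' b).mp (hImp e' ((he' (a lt)).mpr hsata) b hb)

lemma cover_mem [Countable (Σ l, L.Functions l)] [Countable (Σ l, L.Relations l)]
    (hsat : Aleph1Saturated L M) (hXc : X.Countable) (a : Fin n → M)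
    (hfin : (typeRealizations L M (X ∪ a '' {j : Fin n | j ≠ lt}) (a lt)).Finite) :
    ∃ e : IdxT L X n, a ∈ SatT X lt e ∧ (∀ e' : IdxA L X lt, a ∈ ImpSet X lt e e') ∧
      {b | RelT X lt e a b} =
        typeRealizations L M (X ∪ a '' {j : Fin n | j ≠ lt}) (a lt) := by
  obtain ⟨e', hsat', hiso⟩ := exists_isolating X lt hsat hXc a hfin
  obtain ⟨e, he⟩ := convAT X lt e'
  have hsol : {b | RelT X lt e a b} =
      typeRealizations L M (X ∪ a '' {j : Fin n | j ≠ lt}) (a lt) := by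
    ext b
    simp only [Set.mem_setOf_eq]
    constructor
    · intro h
      exact hiso b ((he a b).mp h)
    · intro hbR
      have hrel : RelA X lt e' a b :=
        hbR e'.1 e'.2.1 (fun i => pval X lt a (e'.2.2 i)) (convAZ_mem X lt a e') hsat'
      exact (he a b).mpr hrel
  refine ⟨e, (he a (a lt)).mpr hsat', ?_, hsol⟩
  intro e''
  simp only [ImpSet, Set.mem_setOf_eq]
  intro hsat'' b hbT
  have hbR : b ∈ typeRealizations L M (X ∪ a '' {j : Fin n | j ≠ lt}) (a lt) := by
    rw [← hsol]
    exact hbT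
  exact hbR e''.1 e''.2.1 (fun i => pval X lt a (e''.2.2 i)) (convAZ_mem X lt a e'') hsat''

end Core



/-- **Lemma 2.6(1)**: if `E ∈ B_V(X)` with `ν^J(π_J(E)) > 0` and fibres of `π_J` on `E`
of size at most `l`, then there are `F ⊆ E` (a countable intersection of `X`-definable sets
with `E`), `r ∈ ℕ` and an `L(X)`-formula `ψ` such that `ν^J(π_J(F)) > 0` and for all
`ā ∈ F`, `ψ(ā_J, x_n)` isolates `tp(a_n/ā_J X)`, which has exactly `r` realizations. -/
theorem lemma_isolating_formula
    (L : FirstOrder.Language) (M : Type*) [L.Structure M]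
    [Countable (Σ l, L.Functions l)] [Countable (Σ l, L.Relations l)]
    (hsat : Aleph1Saturated L M)
    (n : ℕ) (hn : 2 ≤ n)
    (ν : @Measure (Fin n → M) (defSigma L M (Fin n)))
    (hprob : ν Set.univ = 1)
    (hdef : DefinabilityCond L M n ν)
    (hfub : FubiniCond L M n ν)
    (X : Set M) (hXc : X.Countable)
    (E : Set (Fin n → M))
    (hEX : MeasurableSet[MeasurableSpace.generateFrom
      {s : Set (Fin n → M) | X.Definable L s}] E)
    (ha : 0 < nuI L M n ν (Jset n hn) (proj M n (Jset n hn) '' E))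
    (l : ℕ)
    (hb : ∀ a ∈ E,
      (proj M n (Jset n hn) ⁻¹' {proj M n (Jset n hn) a} ∩ E).Finite ∧
      (proj M n (Jset n hn) ⁻¹' {proj M n (Jset n hn) a} ∩ E).ncard ≤ l) :
    ∃ (Fseq : ℕ → Set (Fin n → M)) (r m : ℕ)
      (ψ : L.Formula (Fin m ⊕ Fin n)) (p : Fin m → M),
      (∀ i : ℕ, X.Definable L (Fseq i)) ∧ (∀ i : Fin m, p i ∈ X) ∧
      0 < nuI L M n ν (Jset n hn)
        (proj M n (Jset n hn) '' (E ∩ ⋂ i : ℕ, Fseq i)) ∧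
      ∀ a ∈ E ∩ ⋂ i : ℕ, Fseq i,
        IsolatesTypeOver L M (X ∪ a '' {i : Fin n | i ≠ ⟨n - 1, by omega⟩})
          {b : M | ψ.Realize (Sum.elim p (Function.update a ⟨n - 1, by omega⟩ b))}
          (a ⟨n - 1, by omega⟩) ∧
        (typeRealizations L M (X ∪ a '' {i : Fin n | i ≠ ⟨n - 1, by omega⟩})
          (a ⟨n - 1, by omega⟩)).Finite ∧
        (typeRealizations L M (X ∪ a '' {i : Fin n | i ≠ ⟨n - 1, by omega⟩})
          (a ⟨n - 1, by omega⟩)).ncard = r := by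
  classical
  set lt : Fin n := ⟨n - 1, by omega⟩ with hlt
  have hi0 : (⟨0, by omega⟩ : Fin n) ≠ lt := by
    simp only [hlt, Fin.ext_iff, ne_eq]
    omega
  haveI := hXc.to_subtype
  have hJmem : ∀ i : Fin n, i ∈ Jset n hn ↔ i ≠ lt := by
    intro i
    simp [Jset, Finset.mem_compl, Finset.mem_singleton, hlt]
  have hfib : ∀ (a : Fin n → M) (b : M),
      Function.update a lt b ∈ proj M n (Jset n hn) ⁻¹' {proj M n (Jset n hn) a} := by
    intro a b
    simp only [Set.mem_preimage, Set.mem_singleton_iff]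
    funext i
    show Function.update a lt b (i : Fin n) = a i
    exact Function.update_of_ne ((hJmem i).mp i.2) _ _
  have hRfin : ∀ a ∈ E,
      (typeRealizations L M (X ∪ a '' {j : Fin n | j ≠ lt}) (a lt)).Finite :=
    fun a haE => typeReal_finite X lt hi0 hEX haE (hb a haE).1 (hfib a)
  set Big : IdxT L X n × ℕ → Set (Fin n → M) := fun k =>
    SatT X lt k.1 ∩ (AtLeastSet X lt k.1 k.2 ∩ (AtLeastSet X lt k.1 (k.2 + 1))ᶜ) ∩
      ⋂ e' : IdxA L X lt, ImpSet X lt k.1 e' with hBig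
  have hcover : E ⊆ ⋃ k : IdxT L X n × ℕ, (E ∩ Big k) := by
    intro a haE
    obtain ⟨e, hSat, hImp, hsol⟩ := cover_mem X lt hsat hXc a (hRfin a haE)
    set R := typeRealizations L M (X ∪ a '' {j : Fin n | j ≠ lt}) (a lt) with hRdef
    refine Set.mem_iUnion.mpr ⟨(e, R.ncard), haE, Set.mem_inter
      (Set.mem_inter hSat (Set.mem_inter ?_ ?_)) (Set.mem_iInter.mpr hImp)⟩
    · obtain ⟨b, hbinj, hbmem⟩ := tuple_of_ncard (hRfin a haE) le_rfl
      refine ⟨b, hbinj, fun i => ?_⟩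
      show b i ∈ {c | RelT X lt e a c}
      rw [hsol]
      exact hbmem i
    · rintro ⟨b, hbinj, hbrel⟩
      have hbR : ∀ i, b i ∈ R := fun i => by
        show b i ∈ R
        rw [← hsol]
        exact hbrel i
      have h2 : R.ncard + 1 ≤ R.ncard := ncard_ge_of_tuple (hRfin a haE) b hbinj hbR
      omega
  have hpos : ∃ k : IdxT L X n × ℕ,
      0 < nuI L M n ν (Jset n hn) (proj M n (Jset n hn) '' (E ∩ Big k)) := by
    by_contra hc
    push_neg at hc
    have himg : proj M n (Jset n hn) '' E ⊆
        ⋃ k : IdxT L X n × ℕ, proj M n (Jset n hn) '' (E ∩ Big k) := by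
      rintro _ ⟨a, haE, rfl⟩
      obtain ⟨k, hk⟩ := Set.mem_iUnion.mp (hcover haE)
      exact Set.mem_iUnion.mpr ⟨k, Set.mem_image_of_mem _ hk⟩
    have hle := (measure_mono himg).trans (measure_iUnion_le
      (μ := nuI L M n ν (Jset n hn))
      (fun k : IdxT L X n × ℕ => proj M n (Jset n hn) '' (E ∩ Big k)))
    rw [ENNReal.tsum_eq_zero.mpr (fun k => le_antisymm (hc k) zero_le)] at hle
    exact absurd (ha.trans_le hle) (lt_irrefl 0)
  obtain ⟨⟨e, r⟩, hkpos⟩ := hpos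
  obtain ⟨g, hg⟩ := exists_surjective_nat (IdxA L X lt)
  set Fseq : ℕ → Set (Fin n → M) := fun i => match i with
    | 0 => SatT X lt e
    | 1 => AtLeastSet X lt e r
    | 2 => (AtLeastSet X lt e (r + 1))ᶜ
    | (k + 3) => ImpSet X lt e (g k) with hFseq
  have hEq : (⋂ i : ℕ, Fseq i) = Big (e, r) := by
    ext x
    constructor
    · intro h
      have hx := fun i => Set.mem_iInter.mp h i
      refine Set.mem_inter (Set.mem_inter (hx 0) (Set.mem_inter (hx 1) (hx 2)))
        (Set.mem_iInter.mpr fun e' => ?_)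
      obtain ⟨k, rfl⟩ := hg e'
      exact hx (k + 3)
    · intro h
      obtain ⟨⟨h0, h1, h2⟩, h3⟩ := h
      refine Set.mem_iInter.mpr fun i => ?_
      match i with
      | 0 => exact h0
      | 1 => exact h1
      | 2 => exact h2
      | (k + 3) => exact Set.mem_iInter.mp h3 (g k)
  refine ⟨Fseq, r, e.1, e.2.1, fun i => ((e.2.2 i : M)), ?_, fun i => (e.2.2 i).2, ?_, ?_⟩
  · intro i
    match i with
    | 0 => exact definable_SatT X lt e
    | 1 => exact definable_AtLeastSet X lt e r
    | 2 => exact (definable_AtLeastSet X lt e (r + 1)).compl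
    | (k + 3) => exact definable_ImpSet X lt e (g k)
  · rw [hEq]
    exact hkpos
  · intro a haF
    rw [hEq] at haF
    obtain ⟨haE, ⟨hSat, hAtL, hnAtL⟩, hImpI⟩ := haF
    have hImp : ∀ e' : IdxA L X lt, a ∈ ImpSet X lt e e' :=
      fun e' => Set.mem_iInter.mp hImpI e'
    have hEqType : typeRealizations L M (X ∪ a '' {j : Fin n | j ≠ lt}) (a lt) =
        {b | RelT X lt e a b} := typeReal_eq_solset X lt hi0 e a hSat hImp
    have hsolfin : {b | RelT X lt e a b}.Finite := by
      by_contra hinf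
      obtain ⟨b, hbinj, hbmem⟩ := tuple_exists_of_infinite hinf (r + 1)
      exact hnAtL ⟨b, hbinj, hbmem⟩
    have hcard : {b | RelT X lt e a b}.ncard = r := by
      obtain ⟨b, hbinj, hbmem⟩ := hAtL
      have h1 : r ≤ {b | RelT X lt e a b}.ncard :=
        ncard_ge_of_tuple hsolfin b hbinj hbmem
      have h2 : ¬ (r + 1 ≤ {b | RelT X lt e a b}.ncard) := by
        intro hge
        obtain ⟨b', hb'inj, hb'mem⟩ := tuple_of_ncard hsolfin hge
        exact hnAtL ⟨b', hb'inj, hb'mem⟩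
      omega
    refine ⟨⟨hSat, ?_⟩, ?_, ?_⟩
    · intro m χ q hq hχ b hbψ
      obtain ⟨e', he'⟩ := convZA X lt a χ q hq
      exact (he' b).mp (hImp e' ((he' (a lt)).mpr hχ) b hbψ)
    · show (typeRealizations L M (X ∪ a '' {j : Fin n | j ≠ lt}) (a lt)).Finite
      rw [hEqType]
      exact hsolfin
    · show (typeRealizations L M (X ∪ a '' {j : Fin n | j ≠ lt}) (a lt)).ncard = r
      rw [hEqType]
      exact hcard


end MeasureAmalgamation
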